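/- Fix ε ∈ (0,1) and let B be a ball of radius r contained in Ω = [ε,1]². There exist constants c₁, c₂ > 0 depending only on ε such that for all (a,b) ∈ ℤ_{≥0}² with a + b > 0 and h_{a,b} sufficiently large, the number of c ∈ ℤ_{≥0} for which the line R_{a,b,c} = {(x,y) ∈ ℝ² : a²x + b²y − c² = 0} intersects B lies between c₁ r h_{a,b} and c₂ r h_{a,b}; equivalently, this number is comparable to r h_{a,b}. -/

import Mathlib

open MeasureTheory Filter Set

/-- The set `σ_{a,b}(c) = {(x,y) ∈ [0,1]² : |a²x + b²y − c²| < ψ(h_{a,b})}`,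
where `h_{a,b} = max(a,b)`. -/
def sigC (ψ : ℝ → ℝ) (a b c : ℕ) : Set (EuclideanSpace ℝ (Fin 2)) :=
  {p | p 0 ∈ Set.Icc (0 : ℝ) 1 ∧ p 1 ∈ Set.Icc (0 : ℝ) 1 ∧
    |(a : ℝ) ^ 2 * p 0 + (b : ℝ) ^ 2 * p 1 - (c : ℝ) ^ 2| < ψ ((max a b : ℕ) : ℝ)}

/-- The set `σ_{a,b} = ⋃_{c ∈ ℤ_{≥0}} σ_{a,b}(c)`. -/
def sigU (ψ : ℝ → ℝ) (a b : ℕ) : Set (EuclideanSpace ℝ (Fin 2)) :=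
  ⋃ c : ℕ, sigC ψ a b c

/-- The square `Ω = [ε,1]²`. -/
def unitSq (ε : ℝ) : Set (EuclideanSpace ℝ (Fin 2)) :=
  {p | p 0 ∈ Set.Icc ε 1 ∧ p 1 ∈ Set.Icc ε 1}

/-- The line `R_{a,b,c} = {(x,y) ∈ ℝ² : a²x + b²y − c² = 0}`. -/
def lineR (a b c : ℕ) : Set (EuclideanSpace ℝ (Fin 2)) :=
  {p | (a : ℝ) ^ 2 * p 0 + (b : ℝ) ^ 2 * p 1 - (c : ℝ) ^ 2 = 0}

/-- A line `{p | ⟪n,p⟫ = C}` meets the open ball `B(x₀,r)` iff the distance from `x₀`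
to the line is `< r`. -/
lemma aux_line_meets_ball {E : Type*} [NormedAddCommGroup E] [InnerProductSpace ℝ E]
    (n x₀ : E) (hn : n ≠ 0) (r C : ℝ) :
    (∃ p, (inner ℝ n p : ℝ) = C ∧ dist p x₀ < r) ↔ |(inner ℝ n x₀ : ℝ) - C| < r * ‖n‖ := by
  constructor
  · rintro ⟨p, hp, hd⟩
    have h1 : (inner ℝ n x₀ - C : ℝ) = inner ℝ n (x₀ - p) := by
      rw [inner_sub_right, hp]
    rw [h1]
    calc |(inner ℝ n (x₀ - p) : ℝ)| ≤ ‖n‖ * ‖x₀ - p‖ := abs_real_inner_le_norm n _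
      _ < ‖n‖ * r := by
          apply mul_lt_mul_of_pos_left _ (norm_pos_iff.mpr hn)
          rw [← dist_eq_norm, dist_comm]; exact hd
      _ = r * ‖n‖ := mul_comm _ _
  · intro h
    have hn2 : (0:ℝ) < ‖n‖ := norm_pos_iff.mpr hn
    refine ⟨x₀ - (((inner ℝ n x₀ : ℝ) - C) / ‖n‖^2) • n, ?_, ?_⟩
    · rw [inner_sub_right, inner_smul_right, real_inner_self_eq_norm_sq]
      field_simp
      ring
    · rw [dist_eq_norm]
      have : x₀ - (((inner ℝ n x₀ : ℝ) - C) / ‖n‖^2) • n - x₀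
          = -((((inner ℝ n x₀ : ℝ) - C) / ‖n‖^2) • n) := by abel
      rw [this, norm_neg, norm_smul]
      rw [norm_div, Real.norm_eq_abs, Real.norm_eq_abs, abs_pow, abs_norm]
      rw [div_mul_eq_mul_div, div_lt_iff₀ (by positivity)]
      calc |(inner ℝ n x₀ : ℝ) - C| * ‖n‖ < (r * ‖n‖) * ‖n‖ :=
            mul_lt_mul_of_pos_right h hn2
        _ = r * ‖n‖^2 := by ring

lemma aux_ncard_lb (u v : ℝ) (hu : 0 ≤ u) (huv : u + 2 ≤ v) :
    (v - u) / 2 ≤ ({c : ℕ | u < (c:ℝ) ∧ (c:ℝ) < v}.ncard : ℝ) := by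
  have heq : {c : ℕ | u < (c:ℝ) ∧ (c:ℝ) < v} = ↑(Finset.Ioo ⌊u⌋₊ ⌈v⌉₊) := by
    ext c
    simp [Nat.floor_lt hu, Nat.lt_ceil]
  rw [heq, Set.ncard_coe_finset, Nat.card_Ioo]
  have h1 : (⌊u⌋₊ : ℝ) ≤ u := Nat.floor_le hu
  have h2 : v ≤ (⌈v⌉₊ : ℝ) := Nat.le_ceil v
  have hk : ⌊u⌋₊ + 1 ≤ ⌈v⌉₊ := by
    have : (⌊u⌋₊ : ℝ) + 1 ≤ (⌈v⌉₊ : ℝ) := by linarith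
    exact_mod_cast this
  have : ((⌈v⌉₊ - ⌊u⌋₊ - 1 : ℕ) : ℝ) = (⌈v⌉₊ : ℝ) - ⌊u⌋₊ - 1 := by
    have e1 : ⌈v⌉₊ - ⌊u⌋₊ - 1 = ⌈v⌉₊ - (⌊u⌋₊ + 1) := by omega
    rw [e1, Nat.cast_sub hk]
    push_cast; ring
  rw [this]
  linarith

lemma aux_ncard_ub (u v : ℝ) (hu : 0 ≤ u) (huv : u ≤ v) :
    ({c : ℕ | u ≤ (c:ℝ) ∧ (c:ℝ) ≤ v}.ncard : ℝ) ≤ v - u + 1 := by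
  have hv : 0 ≤ v := le_trans hu huv
  have heq : {c : ℕ | u ≤ (c:ℝ) ∧ (c:ℝ) ≤ v} = ↑(Finset.Icc ⌈u⌉₊ ⌊v⌋₊) := by
    ext c
    simp [Nat.ceil_le, Nat.le_floor_iff hv]
  rw [heq, Set.ncard_coe_finset, Nat.card_Icc]
  have h1 : u ≤ (⌈u⌉₊ : ℝ) := Nat.le_ceil u
  have h2 : (⌊v⌋₊ : ℝ) ≤ v := Nat.floor_le hv
  rcases le_or_gt ⌈u⌉₊ (⌊v⌋₊ + 1) with h | h
  · have : ((⌊v⌋₊ + 1 - ⌈u⌉₊ : ℕ) : ℝ) = (⌊v⌋₊ : ℝ) + 1 - ⌈u⌉₊ := by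
      push_cast [Nat.cast_sub h]; ring
    rw [this]; linarith
  · have : ⌊v⌋₊ + 1 - ⌈u⌉₊ = 0 := by omega
    rw [this]; push_cast; linarith

lemma aux_radius_le (ε : ℝ) (x₀ : EuclideanSpace ℝ (Fin 2)) (r : ℝ) (hr : 0 < r)
    (hB : Metric.ball x₀ r ⊆ unitSq ε) :
    r ≤ 1 - ε := by
  have hmem : ∀ s : ℝ, |s| < r → x₀ 0 + s ∈ Set.Icc ε 1 := by
    intro s hs
    have hball : (x₀ + s • EuclideanSpace.single 0 (1:ℝ)) ∈ Metric.ball x₀ r := by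
      rw [Metric.mem_ball, dist_eq_norm, add_sub_cancel_left, norm_smul,
        EuclideanSpace.norm_single]
      simpa using hs
    have h := (hB hball).1
    have happ : (x₀ + s • EuclideanSpace.single 0 (1:ℝ) : EuclideanSpace ℝ (Fin 2)) 0
        = x₀ 0 + s := by
      simp [EuclideanSpace.single_apply]
    rwa [happ] at h
  have h1 := hmem (r/2) (by rw [abs_of_pos (by linarith)]; linarith)
  have h2 := hmem (-(r/2)) (by rw [abs_neg, abs_of_pos (by linarith)]; linarith)
  simp only [Set.mem_Icc] at h1 h2
  linarith [h1.2, h2.1]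

set_option maxHeartbeats 1000000 in
/-- **The number of different `c`.** Fix `ε ∈ (0,1)`. There are constants `c₁, c₂ > 0`
depending only on `ε` such that for every ball `B` of radius `r` contained in `[ε,1]²`
and all `(a,b)` with `a + b > 0` and `h_{a,b}` sufficiently large, the number of `c ∈ ℤ_{≥0}`
for which the line `R_{a,b,c}` meets `B` lies between `c₁ r h_{a,b}` and `c₂ r h_{a,b}`. -/
theorem count_of_lines_hitting_ball
    (ε : ℝ) (hε : ε ∈ Set.Ioo (0 : ℝ) 1) :
    ∃ c₁ c₂ : ℝ, 0 < c₁ ∧ 0 < c₂ ∧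
      ∀ (x₀ : EuclideanSpace ℝ (Fin 2)) (r : ℝ), 0 < r →
        Metric.ball x₀ r ⊆ unitSq ε →
        ∃ H₀ : ℕ, ∀ a b : ℕ, 0 < a + b → H₀ ≤ max a b →
          c₁ * r * ((max a b : ℕ) : ℝ) ≤
              (({c : ℕ | (lineR a b c ∩ Metric.ball x₀ r).Nonempty}.ncard : ℝ)) ∧
            (({c : ℕ | (lineR a b c ∩ Metric.ball x₀ r).Nonempty}.ncard : ℝ)) ≤
              c₂ * r * ((max a b : ℕ) : ℝ) := by
  obtain ⟨hε0, hε1⟩ := hε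
  have hsε : 0 < Real.sqrt ε := Real.sqrt_pos.mpr hε0
  refine ⟨1/8, 6 / Real.sqrt ε, by norm_num, by positivity, ?_⟩
  intro x₀ r hr0 hB
  refine ⟨⌈(8:ℝ)/r⌉₊, ?_⟩
  intro a b hab hH
  set hr : ℝ := ((max a b : ℕ) : ℝ) with hhrdef
  have hhr1 : (1:ℝ) ≤ hr := by
    rw [hhrdef]
    exact_mod_cast (by omega : 1 ≤ max a b)
  have hhr0 : (0:ℝ) < hr := by linarith
  have hrle : r ≤ 1 - ε := aux_radius_le ε x₀ r hr0 hB
  have hr1 : r ≤ 1 := by linarith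
  -- the normal vector
  set n : EuclideanSpace ℝ (Fin 2) :=
    (WithLp.equiv 2 (Fin 2 → ℝ)).symm ![(a:ℝ)^2, (b:ℝ)^2] with hndef
  have hinner : ∀ p : EuclideanSpace ℝ (Fin 2),
      (inner ℝ n p : ℝ) = (a:ℝ)^2 * p 0 + (b:ℝ)^2 * p 1 := by
    intro p
    simp [hndef, PiLp.inner_apply, Fin.sum_univ_two, RCLike.inner_apply]
    ring
  have hnz : n ≠ 0 := by
    intro hz
    have h0 : n 0 = 0 := by rw [hz]; rfl
    have h1 : n 1 = 0 := by rw [hz]; rfl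
    simp [hndef] at h0 h1
    omega
  have hNpos : (0:ℝ) < ‖n‖ := norm_pos_iff.mpr hnz
  have hN2 : ‖n‖^2 = (a:ℝ)^4 + (b:ℝ)^4 := by
    rw [EuclideanSpace.norm_eq, Real.sq_sqrt (by positivity)]
    simp [hndef, Fin.sum_univ_two]
    ring
  have ha : (a:ℝ) ≤ hr := by rw [hhrdef]; exact_mod_cast le_max_left a b
  have hb : (b:ℝ) ≤ hr := by rw [hhrdef]; exact_mod_cast le_max_right a b
  have ha4 : (a:ℝ)^4 ≤ hr^4 := pow_le_pow_left₀ (Nat.cast_nonneg a) ha 4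
  have hb4 : (b:ℝ)^4 ≤ hr^4 := pow_le_pow_left₀ (Nat.cast_nonneg b) hb 4
  have hsum4 : hr^4 ≤ (a:ℝ)^4 + (b:ℝ)^4 := by
    rcases max_choice a b with h | h <;>
      · rw [hhrdef, h]
        nlinarith [pow_nonneg (Nat.cast_nonneg a : (0:ℝ) ≤ a) 4,
          pow_nonneg (Nat.cast_nonneg b : (0:ℝ) ≤ b) 4]
  have hsum2 : hr^2 ≤ (a:ℝ)^2 + (b:ℝ)^2 := by
    rcases max_choice a b with h | h <;>
      · rw [hhrdef, h]
        nlinarith [sq_nonneg ((a:ℝ)), sq_nonneg ((b:ℝ))]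
  have hNl : hr^2 ≤ ‖n‖ := by
    have h1 : (hr^2)^2 ≤ ‖n‖^2 := by rw [hN2]; nlinarith
    calc hr^2 = Real.sqrt ((hr^2)^2) := (Real.sqrt_sq (by positivity)).symm
      _ ≤ Real.sqrt (‖n‖^2) := Real.sqrt_le_sqrt h1
      _ = ‖n‖ := Real.sqrt_sq (norm_nonneg n)
  have hNu : ‖n‖ ≤ 2 * hr^2 := by
    have h1 : ‖n‖^2 ≤ (2*hr^2)^2 := by rw [hN2]; nlinarith
    calc ‖n‖ = Real.sqrt (‖n‖^2) := (Real.sqrt_sq (norm_nonneg n)).symm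
      _ ≤ Real.sqrt ((2*hr^2)^2) := Real.sqrt_le_sqrt h1
      _ = 2*hr^2 := Real.sqrt_sq (by positivity)
  -- the center value and width
  set t : ℝ := (inner ℝ n x₀ : ℝ) with htdef
  obtain ⟨⟨hx01, hx02⟩, hx11, hx12⟩ := hB (Metric.mem_ball_self hr0)
  have htl : ε * hr^2 ≤ t := by
    rw [htdef, hinner]
    nlinarith [sq_nonneg ((a:ℝ)), sq_nonneg ((b:ℝ))]
  have htu : t ≤ 2 * hr^2 := by
    rw [htdef, hinner]
    nlinarith [sq_nonneg ((a:ℝ)), sq_nonneg ((b:ℝ)), ha4, hb4]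
  have ht0 : (0:ℝ) < t := lt_of_lt_of_le (by positivity) htl
  set R : ℝ := r * ‖n‖ with hRdef
  have hR0 : (0:ℝ) < R := by positivity
  have hRl : r * hr^2 ≤ R := by
    rw [hRdef]; exact mul_le_mul_of_nonneg_left hNl hr0.le
  have hRu : R ≤ 2 * r * hr^2 := by
    rw [hRdef]
    calc r * ‖n‖ ≤ r * (2*hr^2) := mul_le_mul_of_nonneg_left hNu hr0.le
      _ = 2 * r * hr^2 := by ring
  have hRu1 : R ≤ 2 * hr^2 := by nlinarith
  -- the square-root endpoints
  set v : ℝ := Real.sqrt (t + R) with hvdef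
  set u : ℝ := Real.sqrt (max (t - R) 0) with hudef
  have hu0 : 0 ≤ u := Real.sqrt_nonneg _
  have hv0 : 0 ≤ v := Real.sqrt_nonneg _
  have hv2 : v^2 = t + R := Real.sq_sqrt (by linarith)
  have hu2 : u^2 = max (t - R) 0 := Real.sq_sqrt (le_max_right _ _)
  have huv : u ≤ v := by
    apply Real.sqrt_le_sqrt
    rcases max_cases (t - R) 0 with ⟨h, _⟩ | ⟨h, _⟩ <;> rw [h] <;> linarith
  have hvu_sq_l : R ≤ v^2 - u^2 := by
    rw [hv2, hu2]
    rcases max_cases (t - R) 0 with ⟨h, _⟩ | ⟨h, _⟩ <;> rw [h] <;> linarith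
  have hvu_sq_u : v^2 - u^2 ≤ 2*R := by
    rw [hv2, hu2]
    rcases max_cases (t - R) 0 with ⟨h, h'⟩ | ⟨h, _⟩ <;> rw [h] <;> linarith
  have hv_le : v ≤ 2*hr := by
    rw [hvdef]
    calc Real.sqrt (t + R) ≤ Real.sqrt ((2*hr)^2) := by
          apply Real.sqrt_le_sqrt; nlinarith
      _ = 2*hr := Real.sqrt_sq (by positivity)
  have hv_ge : Real.sqrt ε * hr ≤ v := by
    rw [hvdef]
    calc Real.sqrt ε * hr = Real.sqrt (ε * hr^2) := by
          rw [Real.sqrt_mul hε0.le, Real.sqrt_sq hhr0.le]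
      _ ≤ Real.sqrt (t + R) := Real.sqrt_le_sqrt (by linarith)
  -- lower bound on v - u
  have hstep : r*hr^2 ≤ (v-u)*(4*hr) := by
    calc r*hr^2 ≤ R := hRl
      _ ≤ v^2 - u^2 := hvu_sq_l
      _ = (v-u)*(v+u) := by ring
      _ ≤ (v-u)*(4*hr) := mul_le_mul_of_nonneg_left (by linarith) (by linarith)
  have key1 : r * hr / 4 ≤ v - u := by
    have h := le_of_mul_le_mul_right
      (by nlinarith : (r*hr/4) * (4*hr) ≤ (v-u) * (4*hr)) (by positivity)
    exact h
  -- upper bound on v - u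
  have hstep2 : (v-u)*(Real.sqrt ε * hr) ≤ 4*r*hr^2 := by
    calc (v-u)*(Real.sqrt ε * hr) ≤ (v-u)*(v+u) :=
          mul_le_mul_of_nonneg_left (by linarith) (by linarith)
      _ = v^2 - u^2 := by ring
      _ ≤ 2*R := hvu_sq_u
      _ ≤ 4*r*hr^2 := by linarith
  have key2 : (v-u)*Real.sqrt ε ≤ 4*r*hr := by
    have h := le_of_mul_le_mul_right
      (by nlinarith : ((v-u)*Real.sqrt ε) * hr ≤ (4*r*hr) * hr) hhr0
    exact h
  -- size condition from H₀
  have hH' : (8:ℝ)/r ≤ hr := by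
    calc (8:ℝ)/r ≤ (⌈(8:ℝ)/r⌉₊ : ℝ) := Nat.le_ceil _
      _ ≤ hr := by rw [hhrdef]; exact_mod_cast hH
  have hrh8 : (8:ℝ) ≤ r * hr := by
    have := (div_le_iff₀ hr0).mp hH'
    linarith
  have hgap : u + 2 ≤ v := by linarith
  -- identify the counting set
  have hset : {c : ℕ | (lineR a b c ∩ Metric.ball x₀ r).Nonempty}
      = {c : ℕ | |t - (c:ℝ)^2| < R} := by
    ext c
    simp only [Set.mem_setOf_eq]
    rw [show (|t - (c:ℝ)^2| < R) ↔ |(inner ℝ n x₀ : ℝ) - (c:ℝ)^2| < r * ‖n‖ from by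
      rw [htdef, hRdef]]
    rw [← aux_line_meets_ball n x₀ hnz r ((c:ℝ)^2)]
    constructor
    · rintro ⟨p, hp1, hp2⟩
      refine ⟨p, ?_, Metric.mem_ball.mp hp2⟩
      have h := hp1
      simp only [lineR, Set.mem_setOf_eq] at h
      rw [hinner]; linarith
    · rintro ⟨p, hp1, hp2⟩
      refine ⟨p, ?_, Metric.mem_ball.mpr hp2⟩
      simp only [lineR, Set.mem_setOf_eq]
      rw [hinner] at hp1; linarith
  -- sandwich the counting set
  have hsub1 : {c : ℕ | u < (c:ℝ) ∧ (c:ℝ) < v} ⊆ {c : ℕ | |t - (c:ℝ)^2| < R} := by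
    rintro c ⟨h1, h2⟩
    rw [Set.mem_setOf_eq, abs_lt]
    have hc2l : u^2 < (c:ℝ)^2 := pow_lt_pow_left₀ h1 hu0 two_ne_zero
    have hc2u : (c:ℝ)^2 < v^2 := pow_lt_pow_left₀ h2 (Nat.cast_nonneg c) two_ne_zero
    rw [hu2] at hc2l; rw [hv2] at hc2u
    have hmax : t - R ≤ max (t-R) 0 := le_max_left _ _
    constructor <;> linarith
  have hsub2 : {c : ℕ | |t - (c:ℝ)^2| < R} ⊆ {c : ℕ | u ≤ (c:ℝ) ∧ (c:ℝ) ≤ v} := by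
    rintro c hc
    rw [Set.mem_setOf_eq, abs_lt] at hc
    refine ⟨?_, ?_⟩
    · have h1 : max (t-R) 0 ≤ (c:ℝ)^2 := max_le (by linarith) (by positivity)
      calc u = Real.sqrt (max (t-R) 0) := rfl
        _ ≤ Real.sqrt ((c:ℝ)^2) := Real.sqrt_le_sqrt h1
        _ = (c:ℝ) := Real.sqrt_sq (Nat.cast_nonneg c)
    · have h2 : (c:ℝ)^2 ≤ v^2 := by rw [hv2]; linarith
      calc (c:ℝ) = Real.sqrt ((c:ℝ)^2) := (Real.sqrt_sq (Nat.cast_nonneg c)).symm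
        _ ≤ Real.sqrt (v^2) := Real.sqrt_le_sqrt h2
        _ = v := Real.sqrt_sq hv0
  have hfin : {c : ℕ | u ≤ (c:ℝ) ∧ (c:ℝ) ≤ v}.Finite := by
    apply Set.Finite.subset (Set.finite_Iic ⌊v⌋₊)
    rintro c ⟨_, h2⟩
    exact Set.mem_Iic.mpr (Nat.le_floor h2)
  have hSfin : {c : ℕ | |t - (c:ℝ)^2| < R}.Finite := hfin.subset hsub2
  have hmono1 : {c : ℕ | u < (c:ℝ) ∧ (c:ℝ) < v}.ncard
      ≤ {c : ℕ | |t - (c:ℝ)^2| < R}.ncard := Set.ncard_le_ncard hsub1 hSfin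
  have hmono2 : {c : ℕ | |t - (c:ℝ)^2| < R}.ncard
      ≤ {c : ℕ | u ≤ (c:ℝ) ∧ (c:ℝ) ≤ v}.ncard := Set.ncard_le_ncard hsub2 hfin
  have hcount_l := aux_ncard_lb u v hu0 hgap
  have hcount_u := aux_ncard_ub u v hu0 (by linarith)
  rw [hset]
  set M : ℝ := ({c : ℕ | |t - (c:ℝ)^2| < R}.ncard : ℝ) with hMdef
  have hMl : (v-u)/2 ≤ M := le_trans hcount_l (Nat.cast_le.mpr hmono1)
  have hMu : M ≤ v - u + 1 := le_trans (Nat.cast_le.mpr hmono2) hcount_u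
  constructor
  · linarith
  · have hM2 : M ≤ (3/2)*(v-u) := by linarith
    rw [div_mul_eq_mul_div, div_mul_eq_mul_div, le_div_iff₀ hsε]
    have e1 : M * Real.sqrt ε ≤ (3/2)*(v-u) * Real.sqrt ε :=
      mul_le_mul_of_nonneg_right hM2 hsε.le
    have e2 : (3/2)*(v-u) * Real.sqrt ε = (3/2)*((v-u) * Real.sqrt ε) := by ring
    linarith [key2]
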